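/- Define F(s) = 2σ²e^{sσ}(1 - cos(sν)) - ν²(1 - e^{sσ})². Then for σ, ν > 0, F is strictly increasing on (-∞, 0) and strictly decreasing on (0, +∞); in particular F(s) < F(0) = 0 for all s ≠ 0. -/

import Mathlib

open Real Set

/-- If `f 0 = 0` and `f' ≥ 0` on `[0, ∞)`, then `f ≥ 0` on `[0, ∞)`. -/
private lemma nn_aux {f f' : ℝ → ℝ} (hf : ∀ x, HasDerivAt f (f' x) x) (h0 : f 0 = 0)
    (h' : ∀ x, 0 < x → 0 ≤ f' x) : ∀ y, 0 ≤ y → 0 ≤ f y := by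
  intro y hy
  have hm : MonotoneOn f (Ici 0) := by
    apply monotoneOn_of_deriv_nonneg (convex_Ici 0)
      (fun x _ => (hf x).continuousAt.continuousWithinAt)
      (fun x _ => (hf x).differentiableAt.differentiableWithinAt)
    intro x hx
    rw [interior_Ici] at hx
    rw [(hf x).deriv]
    exact h' x hx
  have := hm (self_mem_Ici) (mem_Ici.2 hy) hy
  linarith [this, h0.ge, h0.le]

private lemma pos_aux {f f' : ℝ → ℝ} (hf : ∀ x, HasDerivAt f (f' x) x) (h0 : f 0 = 0)
    (h' : ∀ x, 0 < x → 0 < f' x) : ∀ y, 0 < y → 0 < f y := by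
  intro y hy
  have hm : StrictMonoOn f (Ici 0) := by
    apply strictMonoOn_of_deriv_pos (convex_Ici 0)
      (fun x _ => (hf x).continuousAt.continuousWithinAt)
    intro x hx
    rw [interior_Ici] at hx
    rw [(hf x).deriv]
    exact h' x hx
  have := hm self_mem_Ici (mem_Ici.2 hy.le) hy
  linarith

private lemma sin_ge_cubic : ∀ x : ℝ, 0 ≤ x → x - x^3/6 ≤ Real.sin x := by
  have hd : ∀ x : ℝ, HasDerivAt (fun z : ℝ => Real.sin z - z + z^3/6)
      (Real.cos x - 1 + x^2/2) x := by
    intro x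
    have h := ((Real.hasDerivAt_sin x).sub (hasDerivAt_id x)).add
      ((hasDerivAt_pow 3 x).div_const 6)
    refine h.congr_deriv ?_
    norm_num
    ring
  intro x hx
  have := nn_aux hd (by norm_num)
    (fun z _ => by nlinarith [Real.one_sub_sq_div_two_le_cos (x := z)]) x hx
  linarith

private lemma cos_le_quartic : ∀ x : ℝ, 0 ≤ x → Real.cos x ≤ 1 - x^2/2 + x^4/24 := by
  have hd : ∀ x : ℝ, HasDerivAt (fun z : ℝ => 1 - z^2/2 + z^4/24 - Real.cos z)
      (Real.sin x - x + x^3/6) x := by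
    intro x
    have h := (((hasDerivAt_const x (1:ℝ)).sub ((hasDerivAt_pow 2 x).div_const 2)).add
      ((hasDerivAt_pow 4 x).div_const 24)).sub (Real.hasDerivAt_cos x)
    refine h.congr_deriv ?_
    norm_num
    ring
  intro x hx
  have := nn_aux hd (by norm_num) (fun z hz => by nlinarith [sin_ge_cubic z hz.le]) x hx
  linarith

private lemma sin_le_quintic : ∀ x : ℝ, 0 ≤ x → Real.sin x ≤ x - x^3/6 + x^5/120 := by
  have hd : ∀ x : ℝ, HasDerivAt (fun z : ℝ => z - z^3/6 + z^5/120 - Real.sin z)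
      (1 - x^2/2 + x^4/24 - Real.cos x) x := by
    intro x
    have h := (((hasDerivAt_id x).sub ((hasDerivAt_pow 3 x).div_const 6)).add
      ((hasDerivAt_pow 5 x).div_const 120)).sub (Real.hasDerivAt_sin x)
    refine h.congr_deriv ?_
    norm_num
    ring
  intro x hx
  have := nn_aux hd (by norm_num) (fun z hz => by nlinarith [cos_le_quartic z hz.le]) x hx
  linarith

private lemma exp_quad : ∀ x : ℝ, 0 < x → 1 + x + x^2/2 < Real.exp x := by
  have hd : ∀ x : ℝ, HasDerivAt (fun z : ℝ => Real.exp z - 1 - z - z^2/2)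
      (Real.exp x - 1 - x) x := by
    intro x
    have h := (((Real.hasDerivAt_exp x).sub (hasDerivAt_const x (1:ℝ))).sub
      (hasDerivAt_id x)).sub ((hasDerivAt_pow 2 x).div_const 2)
    refine h.congr_deriv ?_
    norm_num
  intro x hx
  have := pos_aux hd (by norm_num)
    (fun z hz => by nlinarith [Real.add_one_lt_exp (x := z) hz.ne']) x hx
  linarith

private lemma exp_neg_lt (u : ℝ) (hu : 0 < u) : Real.exp (-u) < 1 - u + u^2/2 := by
  have h1 := exp_quad u hu
  have hq : 0 < 1 - u + u^2/2 := by nlinarith [sq_nonneg (u - 1)]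
  rw [Real.exp_neg, inv_lt_iff_one_lt_mul₀ (Real.exp_pos u)]
  nlinarith [mul_lt_mul_of_pos_left h1 hq]

set_option maxHeartbeats 800000 in
/-- `G(s) > 0` for `s < 0`, where `G` is `F'/(2σ e^{sσ})`. -/
private lemma G_neg_pos (σ ν s : ℝ) (hσ : 0 < σ) (hν : 0 < ν) (hs : s < 0) :
    0 < σ^2*(1 - Real.cos (s*ν)) + σ*ν*Real.sin (s*ν) + ν^2*(1 - Real.exp (s*σ)) := by
  by_cases hc : s*σ ≤ -1
  · -- far regime : e^{sσ} < 1/2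
    have h3 : (2:ℝ) < Real.exp 1 := by linarith [Real.exp_one_gt_d9]
    have h4 : Real.exp (-1) * Real.exp 1 = 1 := by rw [← Real.exp_add]; norm_num
    have h5 : Real.exp (-1) < 1/2 := by nlinarith [Real.exp_pos (-1:ℝ)]
    have he : Real.exp (s*σ) < 1/2 :=
      lt_of_le_of_lt (Real.exp_le_exp.2 hc) h5
    nlinarith [Real.sin_sq_add_cos_sq (s*ν), sq_nonneg (σ*Real.sin (s*ν) + ν),
      sq_nonneg (σ*(1 - Real.cos (s*ν))), mul_pos hν hν, he]
  · -- near regime : -1 < sσ < 0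
    push_neg at hc
    obtain ⟨y, hy⟩ : ∃ y : ℝ, y = -(s*ν) := ⟨_, rfl⟩
    have hy0 : 0 < y := by rw [hy]; nlinarith
    have hu0 : 0 < -(s*σ) := by nlinarith
    have hcs : Real.cos (s*ν) = Real.cos y := by rw [hy, Real.cos_neg]
    have hss : Real.sin (s*ν) = -Real.sin y := by
      rw [show s*ν = -y by rw [hy]; ring, Real.sin_neg]
    rw [hcs, hss]
    -- exponential bound: ν²(1-e^{sσ}) > σν y - σ²y²/2
    have hexp : Real.exp (s*σ) < 1 + (s*σ) + (s*σ)^2/2 := by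
      have := exp_neg_lt (-(s*σ)) hu0
      rw [neg_neg] at this
      nlinarith [this]
    have t1 : σ*ν*y - σ^2*y^2/2 < ν^2*(1 - Real.exp (s*σ)) := by
      have := mul_lt_mul_of_pos_left hexp (show (0:ℝ) < ν^2 by positivity)
      rw [hy]
      nlinarith [this]
    -- ν > σ y
    have hνy : σ*y < ν := by
      have h1 : -(s*σ) < 1 := by linarith
      rw [hy]
      nlinarith
    have hsiny : Real.sin y < y := Real.sin_lt hy0
    -- enough: 0 ≤ σ²(1-cos y) - σν sin y + σν y - σ² y²/2
    have key : 0 ≤ σ^2*(1 - Real.cos y) + σ*ν*(y - Real.sin y) - σ^2*y^2/2 := by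
      have t6 : σ*(σ*y)*(y - Real.sin y) ≤ σ*ν*(y - Real.sin y) := by
        nlinarith [mul_nonneg (mul_nonneg hσ.le (sub_nonneg.2 hνy.le)) (sub_nonneg.2 hsiny.le)]
      by_cases hy3 : y ≤ 3
      · have t2 := sin_le_quintic y hy0.le
        have t3 := cos_le_quartic y hy0.le
        have t7 : y^3/6 - y^5/120 ≤ y - Real.sin y := by linarith
        have t8 : σ^2*y*(y^3/6 - y^5/120) ≤ σ^2*y*(y - Real.sin y) :=
          mul_le_mul_of_nonneg_left t7 (by positivity)
        have t9 : 0 ≤ σ^2*y^4*(15 - y^2) :=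
          mul_nonneg (by positivity) (by nlinarith)
        have t4 : σ^2*(y^2/2 - y^4/24) ≤ σ^2*(1 - Real.cos y) :=
          mul_le_mul_of_nonneg_left (by linarith) (sq_nonneg σ)
        linarith [t4, t6, t8, t9]
      · push_neg at hy3
        have t7 : y - 1 ≤ y - Real.sin y := by linarith [Real.sin_le_one y]
        have t8 : σ^2*y*(y-1) ≤ σ^2*y*(y - Real.sin y) :=
          mul_le_mul_of_nonneg_left t7 (by positivity)
        have t9 : 0 ≤ σ^2*(1 - Real.cos y) :=
          mul_nonneg (by positivity) (by linarith [Real.cos_le_one y])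
        have t10 : 0 ≤ σ^2*(y^2/2 - y) := mul_nonneg (by positivity) (by nlinarith)
        linarith [t8, t9, t10, t6]
    nlinarith [t1, key]

/-- `G(s) < 0` for `s > 0`. -/
private lemma G_pos_neg (σ ν s : ℝ) (hσ : 0 < σ) (hν : 0 < ν) (hs : 0 < s) :
    σ^2*(1 - Real.cos (s*ν)) + σ*ν*Real.sin (s*ν) + ν^2*(1 - Real.exp (s*σ)) < 0 := by
  have hx : 0 < s*ν := mul_pos hs hν
  have ht : 0 < s*σ := mul_pos hs hσ
  have h1 : 1 - Real.cos (s*ν) ≤ (s*ν)^2/2 := by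
    linarith [Real.one_sub_sq_div_two_le_cos (x := s*ν)]
  have h2 : Real.sin (s*ν) < s*ν := Real.sin_lt hx
  have h3 : 1 + (s*σ) + (s*σ)^2/2 < Real.exp (s*σ) := exp_quad _ ht
  have h4 : σ^2*(1 - Real.cos (s*ν)) ≤ σ^2*((s*ν)^2/2) :=
    mul_le_mul_of_nonneg_left h1 (by positivity)
  have h5 : σ*ν*Real.sin (s*ν) < σ*ν*(s*ν) :=
    mul_lt_mul_of_pos_left h2 (by positivity)
  have h6 : ν^2*(1 - Real.exp (s*σ)) < ν^2*(-(s*σ) - (s*σ)^2/2) := by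
    nlinarith [mul_lt_mul_of_pos_left h3 (show (0:ℝ) < ν^2 by positivity)]
  nlinarith [h4, h5, h6]

/-- For `σ, ν > 0`, the function `F(s) = 2σ²e^{sσ}(1 - cos(sν)) - ν²(1 - e^{sσ})²`
is strictly increasing on `(-∞, 0)`, strictly decreasing on `(0, +∞)`, and satisfies
`F(s) < F(0) = 0` for all `s ≠ 0`. -/
theorem stmt1 (σ ν : ℝ) (hσ : 0 < σ) (hν : 0 < ν) (F : ℝ → ℝ)
    (hF : ∀ s, F s = 2 * σ ^ 2 * Real.exp (s * σ) * (1 - Real.cos (s * ν)) -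
      ν ^ 2 * (1 - Real.exp (s * σ)) ^ 2) :
    StrictMonoOn F (Set.Iio 0) ∧ StrictAntiOn F (Set.Ioi 0) ∧
      F 0 = 0 ∧ ∀ s ≠ 0, F s < F 0 := by
  have hFfun : F = fun s => 2 * σ ^ 2 * Real.exp (s * σ) * (1 - Real.cos (s * ν)) -
      ν ^ 2 * (1 - Real.exp (s * σ)) ^ 2 := funext hF
  subst hFfun
  have hderiv : ∀ s : ℝ, HasDerivAt
      (fun s => 2 * σ ^ 2 * Real.exp (s * σ) * (1 - Real.cos (s * ν)) -
        ν ^ 2 * (1 - Real.exp (s * σ)) ^ 2)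
      (2*σ*Real.exp (s*σ) *
        (σ^2*(1 - Real.cos (s*ν)) + σ*ν*Real.sin (s*ν) + ν^2*(1 - Real.exp (s*σ)))) s := by
    intro s
    have he : HasDerivAt (fun s : ℝ => Real.exp (s*σ)) (Real.exp (s*σ) * (1*σ)) s :=
      ((hasDerivAt_id s).mul_const σ).exp
    have hc : HasDerivAt (fun s : ℝ => Real.cos (s*ν)) (-Real.sin (s*ν) * (1*ν)) s :=
      ((hasDerivAt_id s).mul_const ν).cos
    have h1 := (he.const_mul (2*σ^2)).mul ((hasDerivAt_const s (1:ℝ)).sub hc)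
    have h2 := (((hasDerivAt_const s (1:ℝ)).sub he).pow 2).const_mul (ν^2)
    refine (h1.sub h2).congr_deriv ?_
    push_cast [Pi.sub_apply]
    ring
  have hcont : Continuous (fun s : ℝ => 2 * σ ^ 2 * Real.exp (s * σ) * (1 - Real.cos (s * ν)) -
      ν ^ 2 * (1 - Real.exp (s * σ)) ^ 2) := by fun_prop
  have hmono : StrictMonoOn (fun s : ℝ => 2 * σ ^ 2 * Real.exp (s * σ) * (1 - Real.cos (s * ν)) -
      ν ^ 2 * (1 - Real.exp (s * σ)) ^ 2) (Iic 0) := by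
    apply strictMonoOn_of_deriv_pos (convex_Iic 0) hcont.continuousOn
    intro x hx
    rw [interior_Iic] at hx
    rw [(hderiv x).deriv]
    exact mul_pos (by positivity) (G_neg_pos σ ν x hσ hν hx)
  have hanti : StrictAntiOn (fun s : ℝ => 2 * σ ^ 2 * Real.exp (s * σ) * (1 - Real.cos (s * ν)) -
      ν ^ 2 * (1 - Real.exp (s * σ)) ^ 2) (Ici 0) := by
    apply strictAntiOn_of_deriv_neg (convex_Ici 0) hcont.continuousOn
    intro x hx
    rw [interior_Ici] at hx
    rw [(hderiv x).deriv]
    exact mul_neg_of_pos_of_neg (by positivity) (G_pos_neg σ ν x hσ hν hx)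
  refine ⟨hmono.mono Iio_subset_Iic_self, hanti.mono Ioi_subset_Ici_self, ?_, ?_⟩
  · simp
  · intro s hs
    rcases lt_or_gt_of_ne hs with h | h
    · exact hmono (mem_Iic.2 h.le) (mem_Iic.2 le_rfl) h
    · exact hanti (mem_Ici.2 le_rfl) (mem_Ici.2 h.le) h
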